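/- Let n be a positive integer and let A = {1, 3, ..., 2n-1} ∪ {2, 4, 8, ..., 2^⌊log₂(2n)⌋} be the set of all odd integers in [1, 2n] together with all powers of 2 in [1, 2n]. Then there do not exist five distinct positive integers b₁, ..., b₅ such that all ten pairwise sums bᵢ + bⱼ lie in A. -/
import Mathlib

lemma core_7 (x y z : ℤ) (hx : 0 < x) (hxy : x < y) (hyz : y < z)
    (h1 : ∃ a : ℕ, x + z = 2 ^ a) (h2 : ∃ c : ℕ, y + z = 2 ^ c) : False := by
  obtain ⟨a, ha⟩ := h1
  obtain ⟨c, hc⟩ := h2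
  have hlt : (2:ℤ) ^ a < 2 ^ c := by rw [← ha, ← hc]; linarith
  have hac : a < c := by
    by_contra h
    push_neg at h
    exact absurd (pow_le_pow_right₀ (by norm_num : (1:ℤ) ≤ 2) h) (not_le.mpr hlt)
  have h2c : (2:ℤ) * 2 ^ a ≤ 2 ^ c := by
    calc (2:ℤ) * 2 ^ a = 2 ^ (a+1) := by ring
    _ ≤ 2 ^ c := pow_le_pow_right₀ (by norm_num) hac
  rw [← ha, ← hc] at h2c
  linarith

lemma sw_7 {p q : ℤ} (h : ∃ a : ℕ, p + q = 2 ^ a) : ∃ a : ℕ, q + p = 2 ^ a := by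
  rwa [add_comm]

lemma three_7 (x y z : ℤ) (hx : 0 < x) (hy : 0 < y) (hz : 0 < z)
    (hxy : x ≠ y) (hxz : x ≠ z) (hyz : y ≠ z)
    (h12 : ∃ a : ℕ, x + y = 2 ^ a) (h13 : ∃ a : ℕ, x + z = 2 ^ a)
    (h23 : ∃ a : ℕ, y + z = 2 ^ a) : False := by
  rcases lt_or_gt_of_ne hxy with h1 | h1 <;>
  rcases lt_or_gt_of_ne hxz with h2 | h2 <;>
  rcases lt_or_gt_of_ne hyz with h3 | h3
  · exact core_7 x y z hx h1 h3 h13 h23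
  · exact core_7 x z y hx h2 h3 h12 (sw_7 h23)
  · linarith
  · exact core_7 z x y hz h2 h1 (sw_7 h23) h12
  · exact core_7 y x z hy h1 h2 h23 h13
  · linarith
  · exact core_7 y z x hy h3 h2 (sw_7 h12) (sw_7 h13)
  · exact core_7 z y x hz h3 h1 (sw_7 h13) (sw_7 h12)

theorem stmt_7 (n : ℕ) (hn : 1 ≤ n) :
    ¬ ∃ b : Fin 5 → ℤ, Function.Injective b ∧ (∀ i, 0 < b i) ∧
      ∀ i j : Fin 5, i < j →
        b i + b j ∈ {x : ℤ | 1 ≤ x ∧ x ≤ 2 * (n : ℤ) ∧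
          (Odd x ∨ ∃ m : ℕ, x = 2 ^ m)} := by
  rintro ⟨b, hinj, hpos, hsum⟩
  -- symmetric version of the sum hypothesis
  have hsum' : ∀ i j : Fin 5, i ≠ j →
      (Odd (b i + b j) ∨ ∃ m : ℕ, b i + b j = 2 ^ m) := by
    intro i j hij
    rcases lt_or_gt_of_ne hij with h | h
    · exact (hsum i j h).2.2
    · rw [add_comm]; exact (hsum j i h).2.2
  -- pigeonhole: three indices with the same parity
  set f : Fin 5 → ZMod 2 := fun i => ((b i : ℤ) : ZMod 2) with hf
  have hcard : Fintype.card (ZMod 2) * 2 < Fintype.card (Fin 5) := by simp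
  obtain ⟨y, hy⟩ := Fintype.exists_lt_card_fiber_of_mul_lt_card f hcard
  obtain ⟨i, j, k, hi, hj, hk, hij, hik, hjk⟩ := Finset.two_lt_card_iff.mp hy
  simp only [Finset.mem_filter] at hi hj hk
  have heven : ∀ p q : Fin 5, f p = y → f q = y → Even (b p + b q) := by
    intro p q hp hq
    have h0 : ((b p + b q : ℤ) : ZMod 2) = 0 := by
      push_cast
      rw [show ((b p : ℤ) : ZMod 2) = f p from rfl, show ((b q : ℤ) : ZMod 2) = f q from rfl,
        hp, hq]
      have : ∀ u : ZMod 2, u + u = 0 := by decide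
      exact this y
    rw [ZMod.intCast_zmod_eq_zero_iff_dvd] at h0
    have h0' : (2:ℤ) ∣ b p + b q := by exact_mod_cast h0
    obtain ⟨t, ht⟩ := h0'
    exact ⟨t, by linarith⟩
  have hpow : ∀ p q : Fin 5, p ≠ q → f p = y → f q = y →
      ∃ m : ℕ, b p + b q = 2 ^ m := by
    intro p q hpq hp hq
    rcases hsum' p q hpq with hodd | hp2
    · exact absurd hodd (Int.not_odd_iff_even.mpr (heven p q hp hq))
    · exact hp2
  exact three_7 (b i) (b j) (b k) (hpos i) (hpos j) (hpos k)
    (fun h => hij (hinj h)) (fun h => hik (hinj h)) (fun h => hjk (hinj h))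
    (hpow i j hij hi.2 hj.2) (hpow i k hik hi.2 hk.2) (hpow j k hjk hj.2 hk.2)
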